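/- A morphism of Hopf monads preserves antipodes: if f : T → T' is a morphism of bimonads between Hopf monads on an autonomous category C, with left antipodes s^l of T and s'^l of T', then s^l_X ∘ T(ˡf_X) = s'^l_X ∘ f_{ˡT'(X)} for every object X, and the analogous identity holds for right antipodes. -/

import Mathlib

open CategoryTheory MonoidalCategory

namespace HopfMonadPaper

variable {C : Type*} [Category C] [MonoidalCategory C]

/-- A comonoidal (oplax monoidal) structure on an endofunctor `T`,
with coproduct `δ X Y : T(X ⊗ Y) ⟶ T(X) ⊗ T(Y)` and counit `ε : T(𝟙) ⟶ 𝟙`. -/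
structure Comonoidal (T : C ⥤ C) where
  δ : ∀ X Y : C, T.obj (X ⊗ Y) ⟶ T.obj X ⊗ T.obj Y
  ε : T.obj (𝟙_ C) ⟶ 𝟙_ C
  δ_natural : ∀ {X X' Y Y' : C} (f : X ⟶ X') (g : Y ⟶ Y'),
    T.map (f ⊗ₘ g) ≫ δ X' Y' = δ X Y ≫ (T.map f ⊗ₘ T.map g)
  coassoc : ∀ X Y Z : C,
    δ (X ⊗ Y) Z ≫ (δ X Y ⊗ₘ 𝟙 (T.obj Z)) ≫ (α_ (T.obj X) (T.obj Y) (T.obj Z)).hom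
      = T.map (α_ X Y Z).hom ≫ δ X (Y ⊗ Z) ≫ (𝟙 (T.obj X) ⊗ₘ δ Y Z)
  counit_left : ∀ X : C,
    δ (𝟙_ C) X ≫ (ε ⊗ₘ 𝟙 (T.obj X)) ≫ (λ_ (T.obj X)).hom = T.map (λ_ X).hom
  counit_right : ∀ X : C,
    δ X (𝟙_ C) ≫ (𝟙 (T.obj X) ⊗ₘ ε) ≫ (ρ_ (T.obj X)).hom = T.map (ρ_ X).hom

/-- The bimonad axioms: the product and unit of the monad are comonoidal. -/
structure IsBimonad (T : Monad C) (Q : Comonoidal T.toFunctor) : Prop where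
  mu_δ : ∀ X Y : C, T.μ.app (X ⊗ Y) ≫ Q.δ X Y
    = T.map (Q.δ X Y) ≫ Q.δ (T.obj X) (T.obj Y) ≫ (T.μ.app X ⊗ₘ T.μ.app Y)
  mu_ε : T.μ.app (𝟙_ C) ≫ Q.ε = T.map Q.ε ≫ Q.ε
  eta_δ : ∀ X Y : C, T.η.app (X ⊗ Y) ≫ Q.δ X Y = T.η.app X ⊗ₘ T.η.app Y
  eta_ε : T.η.app (𝟙_ C) ≫ Q.ε = 𝟙 (𝟙_ C)

/-- A choice of left duals: `d X = ˡX` with evaluation `ev X : ˡX ⊗ X ⟶ 𝟙`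
and coevaluation `coev X : 𝟙 ⟶ X ⊗ ˡX`, satisfying the triangle identities. -/
structure LeftDualData (C : Type*) [Category C] [MonoidalCategory C] where
  d : C → C
  ev : ∀ X : C, d X ⊗ X ⟶ 𝟙_ C
  coev : ∀ X : C, 𝟙_ C ⟶ X ⊗ d X
  tri1 : ∀ X : C, (ρ_ (d X)).inv ≫ (𝟙 (d X) ⊗ₘ coev X) ≫ (α_ (d X) X (d X)).inv
    ≫ (ev X ⊗ₘ 𝟙 (d X)) ≫ (λ_ (d X)).hom = 𝟙 (d X)
  tri2 : ∀ X : C, (λ_ X).inv ≫ (coev X ⊗ₘ 𝟙 X) ≫ (α_ X (d X) X).hom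
    ≫ (𝟙 X ⊗ₘ ev X) ≫ (ρ_ X).hom = 𝟙 X

/-- Left transpose (left dual) of a morphism. -/
def LeftDualData.tr (L : LeftDualData C) {X Y : C} (f : X ⟶ Y) : L.d Y ⟶ L.d X :=
  (ρ_ (L.d Y)).inv ≫ (𝟙 (L.d Y) ⊗ₘ L.coev X) ≫ (𝟙 (L.d Y) ⊗ₘ (f ⊗ₘ 𝟙 (L.d X)))
    ≫ (α_ (L.d Y) Y (L.d X)).inv ≫ (L.ev Y ⊗ₘ 𝟙 (L.d X)) ≫ (λ_ (L.d X)).hom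

/-- A choice of right duals: `d X = ʳX` with evaluation `ev X : X ⊗ ʳX ⟶ 𝟙`
and coevaluation `coev X : 𝟙 ⟶ ʳX ⊗ X`, satisfying the triangle identities. -/
structure RightDualData (C : Type*) [Category C] [MonoidalCategory C] where
  d : C → C
  ev : ∀ X : C, X ⊗ d X ⟶ 𝟙_ C
  coev : ∀ X : C, 𝟙_ C ⟶ d X ⊗ X
  tri1 : ∀ X : C, (ρ_ X).inv ≫ (𝟙 X ⊗ₘ coev X) ≫ (α_ X (d X) X).inv
    ≫ (ev X ⊗ₘ 𝟙 X) ≫ (λ_ X).hom = 𝟙 X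
  tri2 : ∀ X : C, (λ_ (d X)).inv ≫ (coev X ⊗ₘ 𝟙 (d X)) ≫ (α_ (d X) X (d X)).hom
    ≫ (𝟙 (d X) ⊗ₘ ev X) ≫ (ρ_ (d X)).hom = 𝟙 (d X)

/-- Right transpose (right dual) of a morphism. -/
def RightDualData.tr (R : RightDualData C) {X Y : C} (f : X ⟶ Y) : R.d Y ⟶ R.d X :=
  (λ_ (R.d Y)).inv ≫ (R.coev X ⊗ₘ 𝟙 (R.d Y)) ≫ (α_ (R.d X) X (R.d Y)).hom
    ≫ (𝟙 (R.d X) ⊗ₘ (f ⊗ₘ 𝟙 (R.d Y))) ≫ (𝟙 (R.d X) ⊗ₘ R.ev Y) ≫ (ρ_ (R.d X)).hom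

/-- The axioms for a left antipode `s X : T(ˡT(X)) ⟶ ˡX` of a bimonad. -/
structure IsLeftAntipode (T : Monad C) (Q : Comonoidal T.toFunctor) (L : LeftDualData C)
    (s : ∀ X : C, T.obj (L.d (T.obj X)) ⟶ L.d X) : Prop where
  natural : ∀ {X Y : C} (f : X ⟶ Y),
    T.map (L.tr (T.map f)) ≫ s X = s Y ≫ L.tr f
  lant1 : ∀ X : C,
    T.map (L.tr (T.η.app X) ⊗ₘ 𝟙 X) ≫ T.map (L.ev X) ≫ Q.ε
      = Q.δ (L.d (T.obj X)) X
        ≫ ((T.map (L.tr (T.μ.app X)) ≫ s (T.obj X)) ⊗ₘ 𝟙 (T.obj X)) ≫ L.ev (T.obj X)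
  lant2 : ∀ X : C,
    Q.ε ≫ L.coev X ≫ (T.η.app X ⊗ₘ 𝟙 (L.d X))
      = T.map (L.coev (T.obj X)) ≫ Q.δ (T.obj X) (L.d (T.obj X)) ≫ (T.μ.app X ⊗ₘ s X)

/-- The axioms for a right antipode `s X : T(ʳT(X)) ⟶ ʳX` of a bimonad. -/
structure IsRightAntipode (T : Monad C) (Q : Comonoidal T.toFunctor) (R : RightDualData C)
    (s : ∀ X : C, T.obj (R.d (T.obj X)) ⟶ R.d X) : Prop where
  natural : ∀ {X Y : C} (f : X ⟶ Y),
    T.map (R.tr (T.map f)) ≫ s X = s Y ≫ R.tr f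
  rant1 : ∀ X : C,
    T.map (𝟙 X ⊗ₘ R.tr (T.η.app X)) ≫ T.map (R.ev X) ≫ Q.ε
      = Q.δ X (R.d (T.obj X))
        ≫ (𝟙 (T.obj X) ⊗ₘ (T.map (R.tr (T.μ.app X)) ≫ s (T.obj X))) ≫ R.ev (T.obj X)
  rant2 : ∀ X : C,
    Q.ε ≫ R.coev X ≫ (𝟙 (R.d X) ⊗ₘ T.η.app X)
      = T.map (R.coev (T.obj X)) ≫ Q.δ (R.d (T.obj X)) (T.obj X) ≫ (s X ⊗ₘ T.μ.app X)

/-- The canonical morphism `X ⟶ ʳ(ˡX)`. -/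
def canRL (L : LeftDualData C) (R : RightDualData C) (X : C) : X ⟶ R.d (L.d X) :=
  (λ_ X).inv ≫ (R.coev (L.d X) ⊗ₘ 𝟙 X) ≫ (α_ (R.d (L.d X)) (L.d X) X).hom
    ≫ (𝟙 (R.d (L.d X)) ⊗ₘ L.ev X) ≫ (ρ_ (R.d (L.d X))).hom

/-- The canonical morphism `ʳ(ˡX) ⟶ X`. -/
def canRLinv (L : LeftDualData C) (R : RightDualData C) (X : C) : R.d (L.d X) ⟶ X :=
  (λ_ (R.d (L.d X))).inv ≫ (L.coev X ⊗ₘ 𝟙 (R.d (L.d X)))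
    ≫ (α_ X (L.d X) (R.d (L.d X))).hom ≫ (𝟙 X ⊗ₘ R.ev (L.d X)) ≫ (ρ_ X).hom

/-- The canonical morphism `X ⟶ ˡ(ʳX)`. -/
def canLR (L : LeftDualData C) (R : RightDualData C) (X : C) : X ⟶ L.d (R.d X) :=
  (ρ_ X).inv ≫ (𝟙 X ⊗ₘ L.coev (R.d X)) ≫ (α_ X (R.d X) (L.d (R.d X))).inv
    ≫ (R.ev X ⊗ₘ 𝟙 (L.d (R.d X))) ≫ (λ_ (L.d (R.d X))).hom

/-- The canonical morphism `ˡ(ʳX) ⟶ X`. -/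
def canLRinv (L : LeftDualData C) (R : RightDualData C) (X : C) : L.d (R.d X) ⟶ X :=
  (ρ_ (L.d (R.d X))).inv ≫ (𝟙 (L.d (R.d X)) ⊗ₘ R.coev X)
    ≫ (α_ (L.d (R.d X)) (R.d X) X).inv ≫ (L.ev (R.d X) ⊗ₘ 𝟙 X) ≫ (λ_ X).hom


namespace LeftDualData

variable (L : LeftDualData C)

def pairing (X : C) : ExactPairing X (L.d X) where
  coevaluation' := L.coev X
  evaluation' := L.ev X
  coevaluation_evaluation' := by
    have h := L.tri1 X
    rw [← cancel_epi (ρ_ (L.d X)).inv, ← cancel_mono (λ_ (L.d X)).hom]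
    simpa [id_tensorHom, tensorHom_id] using h
  evaluation_coevaluation' := by
    have h := L.tri2 X
    rw [← cancel_epi (λ_ X).inv, ← cancel_mono (ρ_ X).hom]
    simpa [id_tensorHom, tensorHom_id] using h

def hrd (X : C) : HasRightDual X := @HasRightDual.mk _ _ _ _ (L.d X) (L.pairing X)

lemma tr_eq {X Y : C} (f : X ⟶ Y) :
    L.tr f = @rightAdjointMate C _ _ X Y (L.hrd X) (L.hrd Y) f := by
  simp only [LeftDualData.tr, rightAdjointMate, id_tensorHom, tensorHom_id]
  rfl

lemma tr_id (X : C) : L.tr (𝟙 X) = 𝟙 (L.d X) := by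
  rw [L.tr_eq]
  exact @rightAdjointMate_id C _ _ X (L.hrd X)

lemma tr_comp {X Y Z : C} (φ : X ⟶ Y) (ψ : Y ⟶ Z) :
    L.tr (φ ≫ ψ) = L.tr ψ ≫ L.tr φ := by
  rw [L.tr_eq, L.tr_eq, L.tr_eq]
  exact @comp_rightAdjointMate C _ _ X Y Z (L.hrd X) (L.hrd Y) (L.hrd Z) φ ψ

lemma ev_nat {X Y : C} (φ : X ⟶ Y) :
    (L.tr φ ⊗ₘ 𝟙 X) ≫ L.ev X = (𝟙 (L.d Y) ⊗ₘ φ) ≫ L.ev Y := by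
  simp only [id_tensorHom, tensorHom_id]
  rw [L.tr_eq]
  have h := @rightAdjointMate_comp_evaluation C _ _ X Y (L.hrd X) (L.hrd Y) φ
  exact h

lemma coev_nat {X Y : C} (φ : X ⟶ Y) :
    L.coev X ≫ (φ ⊗ₘ 𝟙 (L.d X)) = L.coev Y ≫ (𝟙 Y ⊗ₘ L.tr φ) := by
  simp only [id_tensorHom, tensorHom_id]
  rw [L.tr_eq]
  have h := @coevaluation_comp_rightAdjointMate C _ _ X Y (L.hrd X) (L.hrd Y) φ
  exact h.symm

end LeftDualData

namespace RightDualData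

variable (R : RightDualData C)

def pairing (X : C) : ExactPairing (R.d X) X where
  coevaluation' := R.coev X
  evaluation' := R.ev X
  coevaluation_evaluation' := by
    have h := R.tri1 X
    rw [← cancel_epi (ρ_ X).inv, ← cancel_mono (λ_ X).hom]
    simpa [id_tensorHom, tensorHom_id] using h
  evaluation_coevaluation' := by
    have h := R.tri2 X
    rw [← cancel_epi (λ_ (R.d X)).inv, ← cancel_mono (ρ_ (R.d X)).hom]
    simpa [id_tensorHom, tensorHom_id] using h

def hld (X : C) : HasLeftDual X := @HasLeftDual.mk _ _ _ _ (R.d X) (R.pairing X)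

lemma tr_eq {X Y : C} (f : X ⟶ Y) :
    R.tr f = @leftAdjointMate C _ _ X Y (R.hld X) (R.hld Y) f := by
  simp only [RightDualData.tr, leftAdjointMate, id_tensorHom, tensorHom_id]
  rw [whisker_assoc]
  simp only [Category.assoc, Iso.inv_hom_id_assoc]
  rfl

lemma tr_id (X : C) : R.tr (𝟙 X) = 𝟙 (R.d X) := by
  rw [R.tr_eq]
  exact @leftAdjointMate_id C _ _ X (R.hld X)

lemma tr_comp {X Y Z : C} (φ : X ⟶ Y) (ψ : Y ⟶ Z) :
    R.tr (φ ≫ ψ) = R.tr ψ ≫ R.tr φ := by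
  rw [R.tr_eq, R.tr_eq, R.tr_eq]
  exact @comp_leftAdjointMate C _ _ X Y Z (R.hld X) (R.hld Y) (R.hld Z) φ ψ

lemma ev_nat {X Y : C} (φ : X ⟶ Y) :
    (𝟙 X ⊗ₘ R.tr φ) ≫ R.ev X = (φ ⊗ₘ 𝟙 (R.d Y)) ≫ R.ev Y := by
  simp only [id_tensorHom, tensorHom_id]
  rw [R.tr_eq]
  have h := @leftAdjointMate_comp_evaluation C _ _ X Y (R.hld X) (R.hld Y) φ
  exact h

lemma coev_nat {X Y : C} (φ : X ⟶ Y) :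
    R.coev Y ≫ (R.tr φ ⊗ₘ 𝟙 Y) = R.coev X ≫ (𝟙 (R.d X) ⊗ₘ φ) := by
  simp only [id_tensorHom, tensorHom_id]
  rw [R.tr_eq]
  have h := @coevaluation_comp_leftAdjointMate C _ _ X Y (R.hld X) (R.hld Y) φ
  exact h

end RightDualData

section Core

variable {T : Monad C}

lemma delta_nat_left (Q : Comonoidal T.toFunctor) {X X' : C} (a : X ⟶ X') (Z : C) :
    Q.δ X Z ≫ (T.map a ⊗ₘ 𝟙 (T.obj Z)) = T.map (a ⊗ₘ 𝟙 Z) ≫ Q.δ X' Z := by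
  have h := Q.δ_natural a (𝟙 Z)
  simp only [CategoryTheory.Functor.map_id] at h
  exact h.symm

lemma delta_nat_right (Q : Comonoidal T.toFunctor) (Z : C) {X X' : C} (a : X ⟶ X') :
    Q.δ Z X ≫ (𝟙 (T.obj Z) ⊗ₘ T.map a) = T.map (𝟙 Z ⊗ₘ a) ≫ Q.δ Z X' := by
  have h := Q.δ_natural (𝟙 Z) a
  simp only [CategoryTheory.Functor.map_id] at h
  exact h.symm

/-- The "free module" version of the first left-antipode axiom. -/
lemma lant1_free (Q : Comonoidal T.toFunctor) (L : LeftDualData C)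
    (sl : ∀ X : C, T.obj (L.d (T.obj X)) ⟶ L.d X)
    (hsl : IsLeftAntipode T Q L sl) (Y : C) :
    T.map (L.tr (T.μ.app Y) ⊗ₘ 𝟙 (T.obj Y)) ≫ Q.δ (L.d (T.obj (T.obj Y))) (T.obj Y)
      ≫ (sl (T.obj Y) ⊗ₘ T.μ.app Y) ≫ L.ev (T.obj Y)
    = T.map (L.ev (T.obj Y)) ≫ Q.ε := by
  have e1 : (sl (T.obj Y) ⊗ₘ T.μ.app Y) ≫ L.ev (T.obj Y)
      = ((T.map (L.tr (T.map (T.μ.app Y))) ≫ sl (T.obj (T.obj Y))) ⊗ₘ 𝟙 (T.obj (T.obj Y)))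
          ≫ L.ev (T.obj (T.obj Y)) := by
    rw [← tensor_id_comp_id_tensor (T.μ.app Y) (sl (T.obj Y)), Category.assoc,
      ← L.ev_nat (T.μ.app Y), ← Category.assoc, ← comp_tensor_id,
      ← hsl.natural (T.μ.app Y)]
    rfl
  rw [e1, comp_tensor_id]
  slice_lhs 2 3 => rw [delta_nat_left]
  slice_lhs 1 2 => rw [← T.toFunctor.map_comp, ← comp_tensor_id, ← L.tr_comp]
  have e2 : T.map (T.μ.app Y) ≫ T.μ.app Y = T.μ.app (T.obj Y) ≫ T.μ.app Y := T.assoc Y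
  rw [e2, L.tr_comp, comp_tensor_id, T.toFunctor.map_comp]
  slice_lhs 2 3 => rw [← delta_nat_left]
  slice_lhs 3 4 => rw [← comp_tensor_id]
  slice_lhs 2 4 => rw [← hsl.lant1 (T.obj Y)]
  slice_lhs 1 2 => rw [← T.toFunctor.map_comp, ← comp_tensor_id, ← L.tr_comp, T.left_unit, L.tr_id]
  simp

/-- The coevaluation is a module morphism: "module" version of the second
left-antipode axiom. -/
lemma lmod_coev (Q : Comonoidal T.toFunctor) (L : LeftDualData C)
    (sl : ∀ X : C, T.obj (L.d (T.obj X)) ⟶ L.d X)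
    (hsl : IsLeftAntipode T Q L sl) {M : C} (rM : T.obj M ⟶ M)
    (h1 : T.η.app M ≫ rM = 𝟙 M) (h2 : T.map rM ≫ rM = T.μ.app M ≫ rM) :
    T.map (L.coev M) ≫ Q.δ M (L.d M) ≫ (rM ⊗ₘ (T.map (L.tr rM) ≫ sl M))
      = Q.ε ≫ L.coev M := by
  have e1 : (rM ⊗ₘ (T.map (L.tr rM) ≫ sl M))
      = (𝟙 (T.obj M) ⊗ₘ T.map (L.tr rM)) ≫ (rM ⊗ₘ sl M) := by
    rw [tensorHom_comp_tensorHom, Category.id_comp]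
  rw [e1]
  slice_lhs 2 3 => rw [delta_nat_right]
  slice_lhs 1 2 => rw [← T.toFunctor.map_comp, ← L.coev_nat rM]
  rw [T.toFunctor.map_comp]
  slice_lhs 2 3 => rw [← delta_nat_left]
  have e2 : (T.map rM ⊗ₘ 𝟙 (T.obj (L.d (T.obj M)))) ≫ (rM ⊗ₘ sl M)
      = (T.μ.app M ⊗ₘ sl M) ≫ (rM ⊗ₘ 𝟙 (L.d M)) := by
    rw [tensorHom_comp_tensorHom, Category.id_comp, h2, ← Category.comp_id (sl M), ← tensorHom_comp_tensorHom]
    simp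
  slice_lhs 3 4 => rw [e2]
  slice_lhs 1 3 => rw [← hsl.lant2 M]
  slice_lhs 3 4 => rw [tensorHom_comp_tensorHom, h1, Category.id_comp, id_tensorHom_id]
  simp

set_option maxHeartbeats 1000000 in
/-- Uniqueness-of-dual snake argument. -/
lemma snake_left (Q : Comonoidal T.toFunctor) (L : LeftDualData C) {N : C}
    (a₁ a₂ : T.obj (L.d N) ⟶ L.d N) (r : T.obj N ⟶ N)
    (ha : Q.δ (L.d N) N ≫ (a₂ ⊗ₘ r) ≫ L.ev N = T.map (L.ev N) ≫ Q.ε)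
    (hb : T.map (L.coev N) ≫ Q.δ N (L.d N) ≫ (r ⊗ₘ a₁) = Q.ε ≫ L.coev N) :
    a₂ = a₁ := by
  have tri : (ρ_ (L.d N)).inv ≫ (𝟙 (L.d N) ⊗ₘ L.coev N) ≫ (α_ (L.d N) N (L.d N)).inv
      ≫ (L.ev N ⊗ₘ 𝟙 (L.d N)) = (λ_ (L.d N)).inv := by
    rw [← cancel_mono (λ_ (L.d N)).hom]
    simpa [Category.assoc] using L.tri1 N
  have tri' : (𝟙 (L.d N) ⊗ₘ L.coev N) ≫ (α_ (L.d N) N (L.d N)).inv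
      ≫ (L.ev N ⊗ₘ 𝟙 (L.d N)) ≫ (λ_ (L.d N)).hom = (ρ_ (L.d N)).hom := by
    rw [← cancel_epi (ρ_ (L.d N)).inv]
    simpa [Category.assoc] using L.tri1 N
  have hM1 : T.map (ρ_ (L.d N)).inv ≫ T.map (𝟙 (L.d N) ⊗ₘ L.coev N)
      ≫ T.map (α_ (L.d N) N (L.d N)).inv ≫ Q.δ (L.d N ⊗ N) (L.d N)
      ≫ ((Q.δ (L.d N) N ≫ (a₂ ⊗ₘ r) ≫ L.ev N) ⊗ₘ a₁) ≫ (λ_ (L.d N)).hom = a₁ := by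
    rw [ha]
    rw [show (T.map (L.ev N) ≫ Q.ε) ⊗ₘ a₁
        = (T.map (L.ev N) ⊗ₘ 𝟙 (T.obj (L.d N))) ≫ (Q.ε ⊗ₘ a₁) from by
      rw [tensorHom_comp_tensorHom]; simp]
    slice_lhs 4 5 => rw [delta_nat_left Q (L.ev N) (L.d N)]
    rw [show Q.ε ⊗ₘ a₁ = (Q.ε ⊗ₘ 𝟙 (T.obj (L.d N))) ≫ (𝟙 (𝟙_ C) ⊗ₘ a₁) from by
      rw [tensorHom_comp_tensorHom]; simp]
    have lnat : (𝟙 (𝟙_ C) ⊗ₘ a₁) ≫ (λ_ (L.d N)).hom = (λ_ (T.obj (L.d N))).hom ≫ a₁ := by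
      simp [id_tensorHom]
    slice_lhs 7 8 => rw [lnat]
    slice_lhs 1 4 =>
      rw [← T.toFunctor.map_comp, ← T.toFunctor.map_comp, ← T.toFunctor.map_comp]
    rw [show ((ρ_ (L.d N)).inv ≫ (𝟙 (L.d N) ⊗ₘ L.coev N)
        ≫ (α_ (L.d N) N (L.d N)).inv ≫ (L.ev N ⊗ₘ 𝟙 (L.d N))) = (λ_ (L.d N)).inv from tri]
    slice_lhs 2 4 => rw [Q.counit_left (L.d N)]
    slice_lhs 1 2 => rw [← T.toFunctor.map_comp, Iso.inv_hom_id, T.toFunctor.map_id]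
    simp
  have hM2 : T.map (ρ_ (L.d N)).inv ≫ T.map (𝟙 (L.d N) ⊗ₘ L.coev N)
      ≫ T.map (α_ (L.d N) N (L.d N)).inv ≫ Q.δ (L.d N ⊗ N) (L.d N)
      ≫ ((Q.δ (L.d N) N ≫ (a₂ ⊗ₘ r) ≫ L.ev N) ⊗ₘ a₁) ≫ (λ_ (L.d N)).hom = a₂ := by
    rw [show (Q.δ (L.d N) N ≫ (a₂ ⊗ₘ r) ≫ L.ev N) ⊗ₘ a₁
        = (Q.δ (L.d N) N ⊗ₘ 𝟙 (T.obj (L.d N))) ≫ ((a₂ ⊗ₘ r) ⊗ₘ a₁)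
            ≫ (L.ev N ⊗ₘ 𝟙 (L.d N)) from by
      rw [tensorHom_comp_tensorHom, tensorHom_comp_tensorHom]; simp]
    have co : Q.δ (L.d N ⊗ N) (L.d N) ≫ (Q.δ (L.d N) N ⊗ₘ 𝟙 (T.obj (L.d N)))
        = T.map (α_ (L.d N) N (L.d N)).hom ≫ Q.δ (L.d N) (N ⊗ L.d N)
          ≫ (𝟙 (T.obj (L.d N)) ⊗ₘ Q.δ N (L.d N))
          ≫ (α_ (T.obj (L.d N)) (T.obj N) (T.obj (L.d N))).inv := by
      rw [← cancel_mono (α_ (T.obj (L.d N)) (T.obj N) (T.obj (L.d N))).hom]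
      simpa [Category.assoc] using Q.coassoc (L.d N) N (L.d N)
    slice_lhs 4 5 => rw [co]
    have anat : (α_ (T.obj (L.d N)) (T.obj N) (T.obj (L.d N))).inv ≫ ((a₂ ⊗ₘ r) ⊗ₘ a₁)
        = (a₂ ⊗ₘ (r ⊗ₘ a₁)) ≫ (α_ (L.d N) N (L.d N)).inv := by
      rw [associator_inv_naturality]
    slice_lhs 7 8 => rw [anat]
    slice_lhs 6 7 => rw [show (𝟙 (T.obj (L.d N)) ⊗ₘ Q.δ N (L.d N)) ≫ (a₂ ⊗ₘ (r ⊗ₘ a₁))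
        = a₂ ⊗ₘ (Q.δ N (L.d N) ≫ (r ⊗ₘ a₁)) from by rw [tensorHom_comp_tensorHom]; simp]
    slice_lhs 3 4 => rw [← T.toFunctor.map_comp, Iso.inv_hom_id, T.toFunctor.map_id]
    simp only [Category.id_comp]
    slice_lhs 2 3 => rw [← delta_nat_right Q (L.d N) (L.coev N)]
    slice_lhs 3 4 => rw [show (𝟙 (T.obj (L.d N)) ⊗ₘ T.map (L.coev N))
        ≫ (a₂ ⊗ₘ (Q.δ N (L.d N) ≫ (r ⊗ₘ a₁)))
        = a₂ ⊗ₘ (T.map (L.coev N) ≫ Q.δ N (L.d N) ≫ (r ⊗ₘ a₁)) from by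
      rw [tensorHom_comp_tensorHom]; simp]
    rw [hb]
    rw [show a₂ ⊗ₘ (Q.ε ≫ L.coev N) = (𝟙 (T.obj (L.d N)) ⊗ₘ Q.ε) ≫ (a₂ ⊗ₘ 𝟙 (𝟙_ C))
        ≫ (𝟙 (L.d N) ⊗ₘ L.coev N) from by rw [tensorHom_comp_tensorHom, tensorHom_comp_tensorHom]; simp]
    simp only [Category.assoc]
    have runat : (a₂ ⊗ₘ 𝟙 (𝟙_ C)) ≫ (ρ_ (L.d N)).hom = (ρ_ (T.obj (L.d N))).hom ≫ a₂ := by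
      simp [tensorHom_id]
    calc T.map (ρ_ (L.d N)).inv ≫ Q.δ (L.d N) (𝟙_ C) ≫ (𝟙 (T.obj (L.d N)) ⊗ₘ Q.ε)
          ≫ (a₂ ⊗ₘ 𝟙 (𝟙_ C)) ≫ (𝟙 (L.d N) ⊗ₘ L.coev N) ≫ (α_ (L.d N) N (L.d N)).inv
          ≫ (L.ev N ⊗ₘ 𝟙 (L.d N)) ≫ (λ_ (L.d N)).hom
        = T.map (ρ_ (L.d N)).inv ≫ Q.δ (L.d N) (𝟙_ C) ≫ (𝟙 (T.obj (L.d N)) ⊗ₘ Q.ε)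
          ≫ (a₂ ⊗ₘ 𝟙 (𝟙_ C)) ≫ (ρ_ (L.d N)).hom := by
          slice_lhs 5 8 => rw [tri']
      _ = T.map (ρ_ (L.d N)).inv ≫ (Q.δ (L.d N) (𝟙_ C) ≫ (𝟙 (T.obj (L.d N)) ⊗ₘ Q.ε)
          ≫ (ρ_ (T.obj (L.d N))).hom) ≫ a₂ := by
          slice_lhs 4 5 => rw [runat]
          simp [Category.assoc]
      _ = T.map (ρ_ (L.d N)).inv ≫ T.map (ρ_ (L.d N)).hom ≫ a₂ := by
          rw [Q.counit_right (L.d N)]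
      _ = a₂ := by
          slice_lhs 1 2 => rw [← T.toFunctor.map_comp, Iso.inv_hom_id, T.toFunctor.map_id]
          simp
  rw [← hM2, hM1]

lemma left_a (T' : Monad C) (Q : Comonoidal T.toFunctor) (Q' : Comonoidal T'.toFunctor)
    (L : LeftDualData C)
    (sl' : ∀ X : C, T'.obj (L.d (T'.obj X)) ⟶ L.d X)
    (hsl' : IsLeftAntipode T' Q' L sl')
    (f : T.toFunctor ⟶ T'.toFunctor)
    (hfδ : ∀ X Y : C, f.app (X ⊗ Y) ≫ Q'.δ X Y = Q.δ X Y ≫ (f.app X ⊗ₘ f.app Y))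
    (hfε : f.app (𝟙_ C) ≫ Q'.ε = Q.ε) (X : C) :
    Q.δ (L.d (T'.obj X)) (T'.obj X)
      ≫ ((T.map (L.tr (T'.μ.app X)) ≫ f.app (L.d (T'.obj (T'.obj X))) ≫ sl' (T'.obj X))
          ⊗ₘ (f.app (T'.obj X) ≫ T'.μ.app X))
      ≫ L.ev (T'.obj X)
    = T.map (L.ev (T'.obj X)) ≫ Q.ε := by
  have d1 : (T.map (L.tr (T'.μ.app X)) ≫ f.app (L.d (T'.obj (T'.obj X))) ≫ sl' (T'.obj X))
      ⊗ₘ (f.app (T'.obj X) ≫ T'.μ.app X)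
      = (T.map (L.tr (T'.μ.app X)) ⊗ₘ 𝟙 (T.obj (T'.obj X)))
        ≫ (f.app (L.d (T'.obj (T'.obj X))) ⊗ₘ f.app (T'.obj X))
        ≫ (sl' (T'.obj X) ⊗ₘ T'.μ.app X) := by
    rw [tensorHom_comp_tensorHom, tensorHom_comp_tensorHom]; simp
  rw [d1]
  slice_lhs 1 2 => rw [delta_nat_left Q (L.tr (T'.μ.app X)) (T'.obj X)]
  simp only [Functor.comp_obj]
  slice_lhs 2 3 => rw [← hfδ]
  slice_lhs 1 2 => rw [f.naturality]
  slice_lhs 2 5 => rw [lant1_free (T := T') Q' L sl' hsl' X]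
  slice_lhs 1 2 => rw [← f.naturality]
  slice_lhs 2 3 => rw [hfε]

lemma recover1 (T' : Monad C) (Q : Comonoidal T.toFunctor) (L : LeftDualData C)
    (sl : ∀ X : C, T.obj (L.d (T.obj X)) ⟶ L.d X)
    (hsl : IsLeftAntipode T Q L sl)
    (f : T.toFunctor ⟶ T'.toFunctor) (X : C) :
    (T.map (L.tr (f.app (T'.obj X) ≫ T'.μ.app X)) ≫ sl (T'.obj X)) ≫ L.tr (T'.η.app X)
      = T.map (L.tr (f.app X)) ≫ sl X := by
  rw [Category.assoc, ← hsl.natural (T'.η.app X), ← Category.assoc,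
    ← T.toFunctor.map_comp, ← L.tr_comp]
  rw [show T.map (T'.η.app X) ≫ f.app (T'.obj X) ≫ T'.μ.app X = f.app X from by
    rw [← Category.assoc, f.naturality, Category.assoc, T'.right_unit, Category.comp_id]
    rfl]
  rfl

lemma recover2 (T' : Monad C) (Q' : Comonoidal T'.toFunctor) (L : LeftDualData C)
    (sl' : ∀ X : C, T'.obj (L.d (T'.obj X)) ⟶ L.d X)
    (hsl' : IsLeftAntipode T' Q' L sl')
    (f : T.toFunctor ⟶ T'.toFunctor) (X : C) :
    (T.map (L.tr (T'.μ.app X)) ≫ f.app (L.d (T'.obj (T'.obj X))) ≫ sl' (T'.obj X))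
        ≫ L.tr (T'.η.app X)
      = f.app (L.d (T'.obj X)) ≫ sl' X := by
  rw [Category.assoc, Category.assoc, ← hsl'.natural (T'.η.app X)]
  slice_lhs 2 3 => rw [← f.naturality]
  slice_lhs 1 2 => rw [← T.toFunctor.map_comp, ← L.tr_comp]
  rw [T'.right_unit, L.tr_id]
  simp

lemma left_main (T' : Monad C) (Q : Comonoidal T.toFunctor) (Q' : Comonoidal T'.toFunctor)
    (L : LeftDualData C)
    (sl : ∀ X : C, T.obj (L.d (T.obj X)) ⟶ L.d X)
    (sl' : ∀ X : C, T'.obj (L.d (T'.obj X)) ⟶ L.d X)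
    (hsl : IsLeftAntipode T Q L sl) (hsl' : IsLeftAntipode T' Q' L sl')
    (f : T.toFunctor ⟶ T'.toFunctor)
    (hfμ : ∀ X : C, T.μ.app X ≫ f.app X
      = T.map (f.app X) ≫ f.app (T'.obj X) ≫ T'.μ.app X)
    (hfη : ∀ X : C, T.η.app X ≫ f.app X = T'.η.app X)
    (hfδ : ∀ X Y : C, f.app (X ⊗ Y) ≫ Q'.δ X Y = Q.δ X Y ≫ (f.app X ⊗ₘ f.app Y))
    (hfε : f.app (𝟙_ C) ≫ Q'.ε = Q.ε) (X : C) :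
    T.map (L.tr (f.app X)) ≫ sl X = f.app (L.d (T'.obj X)) ≫ sl' X := by
  have hr1 : T.η.app (T'.obj X) ≫ (f.app (T'.obj X) ≫ T'.μ.app X) = 𝟙 (T'.obj X) := by
    rw [← Category.assoc, hfη (T'.obj X), T'.left_unit]
    rfl
  have hr2 : T.map (f.app (T'.obj X) ≫ T'.μ.app X) ≫ (f.app (T'.obj X) ≫ T'.μ.app X)
      = T.μ.app (T'.obj X) ≫ (f.app (T'.obj X) ≫ T'.μ.app X) := by
    rw [T.toFunctor.map_comp]
    slice_lhs 2 3 => rw [f.naturality]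
    slice_lhs 3 4 => rw [T'.assoc]
    slice_lhs 1 3 => rw [← hfμ (T'.obj X)]
    simp
  have ha := left_a T' Q Q' L sl' hsl' f hfδ hfε X
  have hb := lmod_coev Q L sl hsl (f.app (T'.obj X) ≫ T'.μ.app X) hr1 hr2
  have key := snake_left Q L _ _ _ ha hb
  calc T.map (L.tr (f.app X)) ≫ sl X
      = (T.map (L.tr (f.app (T'.obj X) ≫ T'.μ.app X)) ≫ sl (T'.obj X))
          ≫ L.tr (T'.η.app X) := (recover1 T' Q L sl hsl f X).symm
    _ = (T.map (L.tr (T'.μ.app X)) ≫ f.app (L.d (T'.obj (T'.obj X))) ≫ sl' (T'.obj X))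
          ≫ L.tr (T'.η.app X) := by rw [← key]
    _ = f.app (L.d (T'.obj X)) ≫ sl' X := recover2 T' Q' L sl' hsl' f X

/-- The "free module" version of the first right-antipode axiom. -/
lemma rant1_free (Q : Comonoidal T.toFunctor) (R : RightDualData C)
    (sr : ∀ X : C, T.obj (R.d (T.obj X)) ⟶ R.d X)
    (hsr : IsRightAntipode T Q R sr) (Y : C) :
    T.map (𝟙 (T.obj Y) ⊗ₘ R.tr (T.μ.app Y)) ≫ Q.δ (T.obj Y) (R.d (T.obj (T.obj Y)))
      ≫ (T.μ.app Y ⊗ₘ sr (T.obj Y)) ≫ R.ev (T.obj Y)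
    = T.map (R.ev (T.obj Y)) ≫ Q.ε := by
  have e1 : (T.μ.app Y ⊗ₘ sr (T.obj Y)) ≫ R.ev (T.obj Y)
      = (𝟙 (T.obj (T.obj Y)) ⊗ₘ (T.map (R.tr (T.map (T.μ.app Y))) ≫ sr (T.obj (T.obj Y))))
          ≫ R.ev (T.obj (T.obj Y)) := by
    rw [← id_tensor_comp_tensor_id (sr (T.obj Y)) (T.μ.app Y), Category.assoc,
      ← R.ev_nat (T.μ.app Y), ← Category.assoc, ← id_tensor_comp,
      ← hsr.natural (T.μ.app Y)]
    rfl
  rw [e1, id_tensor_comp]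
  slice_lhs 2 3 => rw [delta_nat_right]
  slice_lhs 1 2 => rw [← T.toFunctor.map_comp, ← id_tensor_comp, ← R.tr_comp]
  have e2 : T.map (T.μ.app Y) ≫ T.μ.app Y = T.μ.app (T.obj Y) ≫ T.μ.app Y := T.assoc Y
  rw [e2, R.tr_comp, id_tensor_comp, T.toFunctor.map_comp]
  slice_lhs 2 3 => rw [← delta_nat_right]
  slice_lhs 3 4 => rw [← id_tensor_comp]
  slice_lhs 2 4 => rw [← hsr.rant1 (T.obj Y)]
  slice_lhs 1 2 => rw [← T.toFunctor.map_comp, ← id_tensor_comp, ← R.tr_comp, T.left_unit, R.tr_id]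
  simp

/-- The coevaluation is a module morphism: "module" version of the second
right-antipode axiom. -/
lemma rmod_coev (Q : Comonoidal T.toFunctor) (R : RightDualData C)
    (sr : ∀ X : C, T.obj (R.d (T.obj X)) ⟶ R.d X)
    (hsr : IsRightAntipode T Q R sr) {M : C} (rM : T.obj M ⟶ M)
    (h1 : T.η.app M ≫ rM = 𝟙 M) (h2 : T.map rM ≫ rM = T.μ.app M ≫ rM) :
    T.map (R.coev M) ≫ Q.δ (R.d M) M ≫ ((T.map (R.tr rM) ≫ sr M) ⊗ₘ rM)
      = Q.ε ≫ R.coev M := by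
  have e1 : ((T.map (R.tr rM) ≫ sr M) ⊗ₘ rM)
      = (T.map (R.tr rM) ⊗ₘ 𝟙 (T.obj M)) ≫ (sr M ⊗ₘ rM) := by
    rw [tensorHom_comp_tensorHom, Category.id_comp]
  rw [e1]
  slice_lhs 2 3 => rw [delta_nat_left]
  slice_lhs 1 2 => rw [← T.toFunctor.map_comp, R.coev_nat rM]
  rw [T.toFunctor.map_comp]
  slice_lhs 2 3 => rw [← delta_nat_right]
  have e2 : (𝟙 (T.obj (R.d (T.obj M))) ⊗ₘ T.map rM) ≫ (sr M ⊗ₘ rM)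
      = (sr M ⊗ₘ T.μ.app M) ≫ (𝟙 (R.d M) ⊗ₘ rM) := by
    rw [tensorHom_comp_tensorHom, Category.id_comp, h2, ← Category.comp_id (sr M), ← tensorHom_comp_tensorHom]
    simp
  slice_lhs 3 4 => rw [e2]
  slice_lhs 1 3 => rw [← hsr.rant2 M]
  slice_lhs 3 4 => rw [tensorHom_comp_tensorHom, h1, Category.id_comp, id_tensorHom_id]
  simp

set_option maxHeartbeats 1000000 in
/-- Uniqueness-of-dual snake argument, right version. -/
lemma snake_right (Q : Comonoidal T.toFunctor) (R : RightDualData C) {N : C}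
    (a₁ a₂ : T.obj (R.d N) ⟶ R.d N) (r : T.obj N ⟶ N)
    (ha : Q.δ N (R.d N) ≫ (r ⊗ₘ a₂) ≫ R.ev N = T.map (R.ev N) ≫ Q.ε)
    (hb : T.map (R.coev N) ≫ Q.δ (R.d N) N ≫ (a₁ ⊗ₘ r) = Q.ε ≫ R.coev N) :
    a₂ = a₁ := by
  have tri : (λ_ (R.d N)).inv ≫ (R.coev N ⊗ₘ 𝟙 (R.d N)) ≫ (α_ (R.d N) N (R.d N)).hom
      ≫ (𝟙 (R.d N) ⊗ₘ R.ev N) = (ρ_ (R.d N)).inv := by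
    rw [← cancel_mono (ρ_ (R.d N)).hom]
    simpa [Category.assoc] using R.tri2 N
  have tri' : (R.coev N ⊗ₘ 𝟙 (R.d N)) ≫ (α_ (R.d N) N (R.d N)).hom
      ≫ (𝟙 (R.d N) ⊗ₘ R.ev N) ≫ (ρ_ (R.d N)).hom = (λ_ (R.d N)).hom := by
    rw [← cancel_epi (λ_ (R.d N)).inv]
    simpa [Category.assoc] using R.tri2 N
  have hM1 : T.map (λ_ (R.d N)).inv ≫ T.map (R.coev N ⊗ₘ 𝟙 (R.d N))
      ≫ T.map (α_ (R.d N) N (R.d N)).hom ≫ Q.δ (R.d N) (N ⊗ R.d N)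
      ≫ (a₁ ⊗ₘ (Q.δ N (R.d N) ≫ (r ⊗ₘ a₂) ≫ R.ev N)) ≫ (ρ_ (R.d N)).hom = a₂ := by
    rw [show a₁ ⊗ₘ (Q.δ N (R.d N) ≫ (r ⊗ₘ a₂) ≫ R.ev N)
        = (𝟙 (T.obj (R.d N)) ⊗ₘ Q.δ N (R.d N)) ≫ (a₁ ⊗ₘ (r ⊗ₘ a₂))
            ≫ (𝟙 (R.d N) ⊗ₘ R.ev N) from by
      rw [tensorHom_comp_tensorHom, tensorHom_comp_tensorHom]; simp]
    slice_lhs 3 5 => rw [← Q.coassoc (R.d N) N (R.d N)]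
    have anat : (α_ (T.obj (R.d N)) (T.obj N) (T.obj (R.d N))).hom ≫ (a₁ ⊗ₘ (r ⊗ₘ a₂))
        = ((a₁ ⊗ₘ r) ⊗ₘ a₂) ≫ (α_ (R.d N) N (R.d N)).hom := by
      rw [associator_naturality]
    slice_lhs 5 6 => rw [anat]
    slice_lhs 4 5 => rw [show (Q.δ (R.d N) N ⊗ₘ 𝟙 (T.obj (R.d N))) ≫ ((a₁ ⊗ₘ r) ⊗ₘ a₂)
        = (Q.δ (R.d N) N ≫ (a₁ ⊗ₘ r)) ⊗ₘ a₂ from by rw [tensorHom_comp_tensorHom]; simp]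
    slice_lhs 2 3 => rw [← delta_nat_left Q (R.coev N) (R.d N)]
    slice_lhs 3 4 => rw [show (T.map (R.coev N) ⊗ₘ 𝟙 (T.obj (R.d N)))
        ≫ ((Q.δ (R.d N) N ≫ (a₁ ⊗ₘ r)) ⊗ₘ a₂)
        = (T.map (R.coev N) ≫ Q.δ (R.d N) N ≫ (a₁ ⊗ₘ r)) ⊗ₘ a₂ from by
      rw [tensorHom_comp_tensorHom]; simp]
    rw [hb]
    rw [show (Q.ε ≫ R.coev N) ⊗ₘ a₂ = (Q.ε ⊗ₘ 𝟙 (T.obj (R.d N))) ≫ (𝟙 (𝟙_ C) ⊗ₘ a₂)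
        ≫ (R.coev N ⊗ₘ 𝟙 (R.d N)) from by rw [tensorHom_comp_tensorHom, tensorHom_comp_tensorHom]; simp]
    have lnat : (𝟙 (𝟙_ C) ⊗ₘ a₂) ≫ (λ_ (R.d N)).hom = (λ_ (T.obj (R.d N))).hom ≫ a₂ := by
      simp [id_tensorHom]
    simp only [Category.assoc]
    calc T.map (λ_ (R.d N)).inv ≫ Q.δ (𝟙_ C) (R.d N) ≫ (Q.ε ⊗ₘ 𝟙 (T.obj (R.d N)))
          ≫ (𝟙 (𝟙_ C) ⊗ₘ a₂) ≫ (R.coev N ⊗ₘ 𝟙 (R.d N)) ≫ (α_ (R.d N) N (R.d N)).hom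
          ≫ (𝟙 (R.d N) ⊗ₘ R.ev N) ≫ (ρ_ (R.d N)).hom
        = T.map (λ_ (R.d N)).inv ≫ Q.δ (𝟙_ C) (R.d N) ≫ (Q.ε ⊗ₘ 𝟙 (T.obj (R.d N)))
          ≫ (𝟙 (𝟙_ C) ⊗ₘ a₂) ≫ (λ_ (R.d N)).hom := by
          slice_lhs 5 8 => rw [tri']
      _ = T.map (λ_ (R.d N)).inv ≫ (Q.δ (𝟙_ C) (R.d N) ≫ (Q.ε ⊗ₘ 𝟙 (T.obj (R.d N)))
          ≫ (λ_ (T.obj (R.d N))).hom) ≫ a₂ := by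
          slice_lhs 4 5 => rw [lnat]
          simp [Category.assoc]
      _ = T.map (λ_ (R.d N)).inv ≫ T.map (λ_ (R.d N)).hom ≫ a₂ := by
          rw [Q.counit_left (R.d N)]
      _ = a₂ := by
          slice_lhs 1 2 => rw [← T.toFunctor.map_comp, Iso.inv_hom_id, T.toFunctor.map_id]
          simp
  have hM2 : T.map (λ_ (R.d N)).inv ≫ T.map (R.coev N ⊗ₘ 𝟙 (R.d N))
      ≫ T.map (α_ (R.d N) N (R.d N)).hom ≫ Q.δ (R.d N) (N ⊗ R.d N)
      ≫ (a₁ ⊗ₘ (Q.δ N (R.d N) ≫ (r ⊗ₘ a₂) ≫ R.ev N)) ≫ (ρ_ (R.d N)).hom = a₁ := by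
    rw [ha]
    rw [show a₁ ⊗ₘ (T.map (R.ev N) ≫ Q.ε)
        = (𝟙 (T.obj (R.d N)) ⊗ₘ T.map (R.ev N)) ≫ (a₁ ⊗ₘ Q.ε) from by
      rw [tensorHom_comp_tensorHom]; simp]
    slice_lhs 4 5 => rw [delta_nat_right Q (R.d N) (R.ev N)]
    rw [show a₁ ⊗ₘ Q.ε = (𝟙 (T.obj (R.d N)) ⊗ₘ Q.ε) ≫ (a₁ ⊗ₘ 𝟙 (𝟙_ C)) from by
      rw [tensorHom_comp_tensorHom]; simp]
    have runat : (a₁ ⊗ₘ 𝟙 (𝟙_ C)) ≫ (ρ_ (R.d N)).hom = (ρ_ (T.obj (R.d N))).hom ≫ a₁ := by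
      simp [tensorHom_id]
    slice_lhs 7 8 => rw [runat]
    slice_lhs 1 4 =>
      rw [← T.toFunctor.map_comp, ← T.toFunctor.map_comp, ← T.toFunctor.map_comp]
    rw [show ((λ_ (R.d N)).inv ≫ (R.coev N ⊗ₘ 𝟙 (R.d N))
        ≫ (α_ (R.d N) N (R.d N)).hom ≫ (𝟙 (R.d N) ⊗ₘ R.ev N)) = (ρ_ (R.d N)).inv from tri]
    slice_lhs 2 4 => rw [Q.counit_right (R.d N)]
    slice_lhs 1 2 => rw [← T.toFunctor.map_comp, Iso.inv_hom_id, T.toFunctor.map_id]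
    simp
  rw [← hM1, hM2]

lemma right_a (T' : Monad C) (Q : Comonoidal T.toFunctor) (Q' : Comonoidal T'.toFunctor)
    (R : RightDualData C)
    (sr' : ∀ X : C, T'.obj (R.d (T'.obj X)) ⟶ R.d X)
    (hsr' : IsRightAntipode T' Q' R sr')
    (f : T.toFunctor ⟶ T'.toFunctor)
    (hfδ : ∀ X Y : C, f.app (X ⊗ Y) ≫ Q'.δ X Y = Q.δ X Y ≫ (f.app X ⊗ₘ f.app Y))
    (hfε : f.app (𝟙_ C) ≫ Q'.ε = Q.ε) (X : C) :
    Q.δ (T'.obj X) (R.d (T'.obj X))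
      ≫ ((f.app (T'.obj X) ≫ T'.μ.app X)
          ⊗ₘ (T.map (R.tr (T'.μ.app X)) ≫ f.app (R.d (T'.obj (T'.obj X))) ≫ sr' (T'.obj X)))
      ≫ R.ev (T'.obj X)
    = T.map (R.ev (T'.obj X)) ≫ Q.ε := by
  have d1 : (f.app (T'.obj X) ≫ T'.μ.app X)
      ⊗ₘ (T.map (R.tr (T'.μ.app X)) ≫ f.app (R.d (T'.obj (T'.obj X))) ≫ sr' (T'.obj X))
      = (𝟙 (T.obj (T'.obj X)) ⊗ₘ T.map (R.tr (T'.μ.app X)))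
        ≫ (f.app (T'.obj X) ⊗ₘ f.app (R.d (T'.obj (T'.obj X))))
        ≫ (T'.μ.app X ⊗ₘ sr' (T'.obj X)) := by
    rw [tensorHom_comp_tensorHom, tensorHom_comp_tensorHom]; simp
  rw [d1]
  slice_lhs 1 2 => rw [delta_nat_right Q (T'.obj X) (R.tr (T'.μ.app X))]
  simp only [Functor.comp_obj]
  slice_lhs 2 3 => rw [← hfδ]
  slice_lhs 1 2 => rw [f.naturality]
  slice_lhs 2 5 => rw [rant1_free (T := T') Q' R sr' hsr' X]
  slice_lhs 1 2 => rw [← f.naturality]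
  slice_lhs 2 3 => rw [hfε]

lemma rrecover1 (T' : Monad C) (Q : Comonoidal T.toFunctor) (R : RightDualData C)
    (sr : ∀ X : C, T.obj (R.d (T.obj X)) ⟶ R.d X)
    (hsr : IsRightAntipode T Q R sr)
    (f : T.toFunctor ⟶ T'.toFunctor) (X : C) :
    (T.map (R.tr (f.app (T'.obj X) ≫ T'.μ.app X)) ≫ sr (T'.obj X)) ≫ R.tr (T'.η.app X)
      = T.map (R.tr (f.app X)) ≫ sr X := by
  rw [Category.assoc, ← hsr.natural (T'.η.app X), ← Category.assoc,
    ← T.toFunctor.map_comp, ← R.tr_comp]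
  rw [show T.map (T'.η.app X) ≫ f.app (T'.obj X) ≫ T'.μ.app X = f.app X from by
    rw [← Category.assoc, f.naturality, Category.assoc, T'.right_unit, Category.comp_id]
    rfl]
  rfl

lemma rrecover2 (T' : Monad C) (Q' : Comonoidal T'.toFunctor) (R : RightDualData C)
    (sr' : ∀ X : C, T'.obj (R.d (T'.obj X)) ⟶ R.d X)
    (hsr' : IsRightAntipode T' Q' R sr')
    (f : T.toFunctor ⟶ T'.toFunctor) (X : C) :
    (T.map (R.tr (T'.μ.app X)) ≫ f.app (R.d (T'.obj (T'.obj X))) ≫ sr' (T'.obj X))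
        ≫ R.tr (T'.η.app X)
      = f.app (R.d (T'.obj X)) ≫ sr' X := by
  rw [Category.assoc, Category.assoc, ← hsr'.natural (T'.η.app X)]
  slice_lhs 2 3 => rw [← f.naturality]
  slice_lhs 1 2 => rw [← T.toFunctor.map_comp, ← R.tr_comp]
  rw [T'.right_unit, R.tr_id]
  simp

lemma right_main (T' : Monad C) (Q : Comonoidal T.toFunctor) (Q' : Comonoidal T'.toFunctor)
    (R : RightDualData C)
    (sr : ∀ X : C, T.obj (R.d (T.obj X)) ⟶ R.d X)
    (sr' : ∀ X : C, T'.obj (R.d (T'.obj X)) ⟶ R.d X)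
    (hsr : IsRightAntipode T Q R sr) (hsr' : IsRightAntipode T' Q' R sr')
    (f : T.toFunctor ⟶ T'.toFunctor)
    (hfμ : ∀ X : C, T.μ.app X ≫ f.app X
      = T.map (f.app X) ≫ f.app (T'.obj X) ≫ T'.μ.app X)
    (hfη : ∀ X : C, T.η.app X ≫ f.app X = T'.η.app X)
    (hfδ : ∀ X Y : C, f.app (X ⊗ Y) ≫ Q'.δ X Y = Q.δ X Y ≫ (f.app X ⊗ₘ f.app Y))
    (hfε : f.app (𝟙_ C) ≫ Q'.ε = Q.ε) (X : C) :
    T.map (R.tr (f.app X)) ≫ sr X = f.app (R.d (T'.obj X)) ≫ sr' X := by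
  have hr1 : T.η.app (T'.obj X) ≫ (f.app (T'.obj X) ≫ T'.μ.app X) = 𝟙 (T'.obj X) := by
    rw [← Category.assoc, hfη (T'.obj X), T'.left_unit]
    rfl
  have hr2 : T.map (f.app (T'.obj X) ≫ T'.μ.app X) ≫ (f.app (T'.obj X) ≫ T'.μ.app X)
      = T.μ.app (T'.obj X) ≫ (f.app (T'.obj X) ≫ T'.μ.app X) := by
    rw [T.toFunctor.map_comp]
    slice_lhs 2 3 => rw [f.naturality]
    slice_lhs 3 4 => rw [T'.assoc]
    slice_lhs 1 3 => rw [← hfμ (T'.obj X)]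
    simp
  have ha := right_a T' Q Q' R sr' hsr' f hfδ hfε X
  have hb := rmod_coev Q R sr hsr (f.app (T'.obj X) ≫ T'.μ.app X) hr1 hr2
  have key := snake_right Q R _ _ _ ha hb
  calc T.map (R.tr (f.app X)) ≫ sr X
      = (T.map (R.tr (f.app (T'.obj X) ≫ T'.μ.app X)) ≫ sr (T'.obj X))
          ≫ R.tr (T'.η.app X) := (rrecover1 T' Q R sr hsr f X).symm
    _ = (T.map (R.tr (T'.μ.app X)) ≫ f.app (R.d (T'.obj (T'.obj X))) ≫ sr' (T'.obj X))
          ≫ R.tr (T'.η.app X) := by rw [← key]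
    _ = f.app (R.d (T'.obj X)) ≫ sr' X := rrecover2 T' Q' R sr' hsr' f X

end Core


/-- A morphism of Hopf monads preserves antipodes: if `f : T ⟶ T'`
is a morphism of monads which is comonoidal, between Hopf monads `T, T'` with left
antipodes `sl, sl'` and right antipodes `sr, sr'`, then
`s^l_X ∘ T(ˡf_X) = s'^l_X ∘ f_{ˡT'(X)}` and `s^r_X ∘ T(ʳf_X) = s'^r_X ∘ f_{ʳT'(X)}`. -/
theorem stmt9 (T T' : Monad C)
    (Q : Comonoidal T.toFunctor) (Q' : Comonoidal T'.toFunctor)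
    (hB : IsBimonad T Q) (hB' : IsBimonad T' Q')
    (L : LeftDualData C) (R : RightDualData C)
    (sl : ∀ X : C, T.obj (L.d (T.obj X)) ⟶ L.d X)
    (sr : ∀ X : C, T.obj (R.d (T.obj X)) ⟶ R.d X)
    (sl' : ∀ X : C, T'.obj (L.d (T'.obj X)) ⟶ L.d X)
    (sr' : ∀ X : C, T'.obj (R.d (T'.obj X)) ⟶ R.d X)
    (hsl : IsLeftAntipode T Q L sl) (hsr : IsRightAntipode T Q R sr)
    (hsl' : IsLeftAntipode T' Q' L sl') (hsr' : IsRightAntipode T' Q' R sr')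
    (f : T.toFunctor ⟶ T'.toFunctor)
    -- `f` is a morphism of monads …
    (hfμ : ∀ X : C, T.μ.app X ≫ f.app X
      = T.map (f.app X) ≫ f.app (T'.obj X) ≫ T'.μ.app X)
    (hfη : ∀ X : C, T.η.app X ≫ f.app X = T'.η.app X)
    -- … which is comonoidal, i.e. a morphism of bimonads
    (hfδ : ∀ X Y : C, f.app (X ⊗ Y) ≫ Q'.δ X Y = Q.δ X Y ≫ (f.app X ⊗ₘ f.app Y))
    (hfε : f.app (𝟙_ C) ≫ Q'.ε = Q.ε) :
    ∀ X : C,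
      (T.map (L.tr (f.app X)) ≫ sl X = f.app (L.d (T'.obj X)) ≫ sl' X) ∧
      (T.map (R.tr (f.app X)) ≫ sr X = f.app (R.d (T'.obj X)) ≫ sr' X) := by
  intro X
  exact ⟨left_main T' Q Q' L sl sl' hsl hsl' f hfμ hfη hfδ hfε X,
    right_main T' Q Q' R sr sr' hsr hsr' f hfμ hfη hfδ hfε X⟩

end HopfMonadPaper
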